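/- Let n be a positive natural number and work in the ring of formal power series ℚ[[X]]. Let F = (1 − (1 − exp)^{2n}) · (1 − (1 − E₋)^{2n}), where exp is the exponential power series and E₋ is obtained from exp by substituting −X for X, and let E = Σ_{j≥0} (2 X^{2n})^j / j! be the formal power series of exp(2X^{2n}) (the substitution of 2X^{2n} into exp). Then the coefficient of X^0 in F · E is 1 and the coefficient of X^k in F · E is 0 for every k with 1 ≤ k ≤ 2n. -/

import Mathlib

open PowerSeries

/-- The formal power series `exp (2 X^(2n)) = Σ_{j ≥ 0} (2 X^(2n))^j / j!` in
`ℚ[[X]]`: its coefficient in degree `k` is `2^j / j!` if `k = 2n·j` and `0` if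
`2n` does not divide `k`. -/
noncomputable def expTwoXPow (n : ℕ) : PowerSeries ℚ :=
  PowerSeries.mk fun k =>
    if 2 * n ∣ k then (2 : ℚ) ^ (k / (2 * n)) / (Nat.factorial (k / (2 * n)) : ℚ) else 0

private lemma coeff_pow_self_aux {f : PowerSeries ℚ} (h : constantCoeff (R := ℚ) f = 0) (m : ℕ) :
    PowerSeries.coeff (R := ℚ) m (f ^ m) = (PowerSeries.coeff (R := ℚ) 1 f) ^ m := by
  obtain ⟨g, hg⟩ := PowerSeries.X_dvd_iff.mpr h
  have h1 : PowerSeries.coeff (R := ℚ) 1 f = PowerSeries.constantCoeff (R := ℚ) g := by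
    rw [hg]
    simp [PowerSeries.coeff_succ_X_mul 0 g]
  have h2 := PowerSeries.coeff_X_pow_mul (g ^ m) m 0
  rw [zero_add] at h2
  rw [h1, hg, mul_pow, h2, PowerSeries.coeff_zero_eq_constantCoeff, map_pow]

/-- Let `F = (1 - (1 - exp)^(2n)) * (1 - (1 - E₋)^(2n))` be the Conway power
series of the wheel-claspered unknot (with `E₋ = rescale (-1) exp` the series of
`e^{-X}`), and let `E = exp (2 X^(2n))`.  For `n > 0`, the product `F * E` has
constant coefficient `1` and vanishing coefficients in all degrees `k` with
`1 ≤ k ≤ 2n`; i.e. `F = exp (-2 X^(2n))` modulo `X^(2n+1)`. -/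
theorem conway_series_of_wheel_exp_form (n : ℕ) (hn : 0 < n) :
    PowerSeries.coeff (R := ℚ) 0
        ((1 - (1 - PowerSeries.exp ℚ) ^ (2 * n)) *
            (1 - (1 - PowerSeries.rescale (-1 : ℚ) (PowerSeries.exp ℚ)) ^ (2 * n)) *
          expTwoXPow n) = 1 ∧
      ∀ k, 1 ≤ k → k ≤ 2 * n →
        PowerSeries.coeff (R := ℚ) k
          ((1 - (1 - PowerSeries.exp ℚ) ^ (2 * n)) *
              (1 - (1 - PowerSeries.rescale (-1 : ℚ) (PowerSeries.exp ℚ)) ^ (2 * n)) *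
            expTwoXPow n) = 0 := by
  set A : PowerSeries ℚ := 1 - PowerSeries.exp ℚ with hA
  set B : PowerSeries ℚ := 1 - PowerSeries.rescale (-1 : ℚ) (PowerSeries.exp ℚ) with hB
  set E : PowerSeries ℚ := expTwoXPow n with hE
  have hA0 : constantCoeff (R := ℚ) A = 0 := by
    simp [hA, PowerSeries.constantCoeff_exp]
  have hB0 : constantCoeff (R := ℚ) B = 0 := by
    rw [hB, map_sub, map_one, ← PowerSeries.coeff_zero_eq_constantCoeff_apply,
      PowerSeries.coeff_rescale, PowerSeries.coeff_exp]
    norm_num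
  have hA1 : PowerSeries.coeff (R := ℚ) 1 A = -1 := by
    rw [hA, map_sub, PowerSeries.coeff_exp, PowerSeries.coeff_one]
    norm_num
  have hB1 : PowerSeries.coeff (R := ℚ) 1 B = 1 := by
    rw [hB, map_sub, PowerSeries.coeff_rescale, PowerSeries.coeff_exp, PowerSeries.coeff_one]
    norm_num
  have hXA : (X : PowerSeries ℚ) ^ (2 * n) ∣ A ^ (2 * n) :=
    pow_dvd_pow_of_dvd (PowerSeries.X_dvd_iff.mpr hA0) _
  have hXB : (X : PowerSeries ℚ) ^ (2 * n) ∣ B ^ (2 * n) :=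
    pow_dvd_pow_of_dvd (PowerSeries.X_dvd_iff.mpr hB0) _
  -- divisibility of A^(2n) - X^(2n)
  have hdA : (X : PowerSeries ℚ) ^ (2 * n + 1) ∣ A ^ (2 * n) - X ^ (2 * n) := by
    rw [PowerSeries.X_pow_dvd_iff]
    intro m hm
    rw [map_sub, PowerSeries.coeff_X_pow]
    rcases lt_or_eq_of_le (Nat.lt_succ_iff.mp hm) with h | h
    · rw [PowerSeries.X_pow_dvd_iff.mp hXA m h, if_neg (by omega)]; ring
    · subst h
      rw [coeff_pow_self_aux hA0, hA1, if_pos rfl]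
      simp [pow_mul]
  have hdB : (X : PowerSeries ℚ) ^ (2 * n + 1) ∣ B ^ (2 * n) - X ^ (2 * n) := by
    rw [PowerSeries.X_pow_dvd_iff]
    intro m hm
    rw [map_sub, PowerSeries.coeff_X_pow]
    rcases lt_or_eq_of_le (Nat.lt_succ_iff.mp hm) with h | h
    · rw [PowerSeries.X_pow_dvd_iff.mp hXB m h, if_neg (by omega)]; ring
    · subst h
      rw [coeff_pow_self_aux hB0, hB1, if_pos rfl]
      simp
  -- divisibility of E - 1 - 2 X^(2n)
  have hdE : (X : PowerSeries ℚ) ^ (2 * n + 1) ∣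
      E - 1 - (2 : PowerSeries ℚ) * X ^ (2 * n) := by
    rw [PowerSeries.X_pow_dvd_iff]
    intro m hm
    have hm' : m ≤ 2 * n := Nat.lt_succ_iff.mp hm
    have h2C : (2 : PowerSeries ℚ) = PowerSeries.C (R := ℚ) 2 := by
      rw [map_ofNat]
    rw [map_sub, map_sub, h2C, PowerSeries.coeff_C_mul, PowerSeries.coeff_X_pow,
      PowerSeries.coeff_one]
    have hEc : PowerSeries.coeff (R := ℚ) m E =
        if 2 * n ∣ m then (2 : ℚ) ^ (m / (2 * n)) / (Nat.factorial (m / (2 * n)) : ℚ) else 0 := by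
      simp [hE, expTwoXPow]
    rcases Nat.eq_zero_or_pos m with h0 | h0
    · subst h0
      rw [hEc, if_pos (dvd_zero _), if_pos rfl, if_neg (by omega)]
      simp
    · rcases lt_or_eq_of_le hm' with h | h
      · have hnd : ¬ (2 * n ∣ m) := fun hd => by
          have := Nat.le_of_dvd h0 hd; omega
        rw [hEc, if_neg hnd, if_neg (by omega), if_neg (by omega)]
        ring
      · subst h
        rw [hEc, if_pos dvd_rfl, if_neg (by omega), if_pos rfl]
        have hdiv : 2 * n / (2 * n) = 1 := Nat.div_self (by omega)
        rw [hdiv]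
        norm_num
  -- divisibility of the product A^(2n) * B^(2n)
  have hpow : (X : PowerSeries ℚ) ^ (2 * n + 1) ∣ X ^ (2 * n) * X ^ (2 * n) := by
    rw [← pow_add]
    exact pow_dvd_pow X (by omega)
  have hdAB : (X : PowerSeries ℚ) ^ (2 * n + 1) ∣ A ^ (2 * n) * B ^ (2 * n) :=
    hpow.trans (mul_dvd_mul hXA hXB)
  -- divisibility of X^(2n) * (F - 1)
  have hdF1 : (X : PowerSeries ℚ) ^ (2 * n) ∣
      (1 - A ^ (2 * n)) * (1 - B ^ (2 * n)) - 1 := by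
    have : (1 - A ^ (2 * n)) * (1 - B ^ (2 * n)) - 1
        = A ^ (2 * n) * B ^ (2 * n) - A ^ (2 * n) - B ^ (2 * n) := by ring
    rw [this]
    exact dvd_sub (dvd_sub (hXA.mul_right _) hXA) hXB
  have hdXF1 : (X : PowerSeries ℚ) ^ (2 * n + 1) ∣
      ((2 : PowerSeries ℚ) * X ^ (2 * n)) * ((1 - A ^ (2 * n)) * (1 - B ^ (2 * n)) - 1) :=
    hpow.trans (mul_dvd_mul (dvd_mul_left _ _) hdF1)
  -- the key algebraic identity
  have key : (1 - A ^ (2 * n)) * (1 - B ^ (2 * n)) * E - 1 =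
      (1 - A ^ (2 * n)) * (1 - B ^ (2 * n)) * (E - 1 - (2 : PowerSeries ℚ) * X ^ (2 * n))
        - (A ^ (2 * n) - X ^ (2 * n)) - (B ^ (2 * n) - X ^ (2 * n))
        + A ^ (2 * n) * B ^ (2 * n)
        + ((2 : PowerSeries ℚ) * X ^ (2 * n)) * ((1 - A ^ (2 * n)) * (1 - B ^ (2 * n)) - 1) := by
    ring
  have hdvd : (X : PowerSeries ℚ) ^ (2 * n + 1) ∣
      (1 - A ^ (2 * n)) * (1 - B ^ (2 * n)) * E - 1 := by
    rw [key]
    exact dvd_add (dvd_add (dvd_sub (dvd_sub (hdE.mul_left _) hdA) hdB) hdAB) hdXF1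
  have hcoeff : ∀ k, k ≤ 2 * n →
      PowerSeries.coeff (R := ℚ) k ((1 - A ^ (2 * n)) * (1 - B ^ (2 * n)) * E)
        = PowerSeries.coeff (R := ℚ) k 1 := by
    intro k hk
    have h := PowerSeries.X_pow_dvd_iff.mp hdvd k (by omega)
    rw [map_sub, sub_eq_zero] at h
    exact h
  constructor
  · rw [hcoeff 0 (by omega)]
    simp
  · intro k hk1 hk2
    rw [hcoeff k hk2, PowerSeries.coeff_one, if_neg (by omega)]
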